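/- Let f(k, l) denote the smallest number N such that every family of N lines in general position contains either k lines forming a k-cup or l lines forming an l-cap. Then f(k, l) = C(k + l - 4, k - 2) + 1 for all k, l ≥ 2. -/

import Mathlib

open Set

/-- A non-vertical line in the plane represented by (slope, intercept). -/
def lineSet (l : ℝ × ℝ) : Set (ℝ × ℝ) := {p | p.2 = l.1 * p.1 + l.2}

/-- General position: pairwise distinct slopes (hence no two parallel, none vertical
by the representation) and no three concurrent. -/
def GenPos (F : Finset (ℝ × ℝ)) : Prop :=
  (∀ l₁ ∈ F, ∀ l₂ ∈ F, l₁ ≠ l₂ → l₁.1 ≠ l₂.1) ∧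
  (∀ l₁ ∈ F, ∀ l₂ ∈ F, ∀ l₃ ∈ F, l₁ ≠ l₂ → l₁ ≠ l₃ → l₂ ≠ l₃ →
    ¬ ∃ p, p ∈ lineSet l₁ ∧ p ∈ lineSet l₂ ∧ p ∈ lineSet l₃)

/-- Intersection point of two non-parallel lines. -/
noncomputable def interPt (l₁ l₂ : ℝ × ℝ) : ℝ × ℝ :=
  ((l₂.2 - l₁.2) / (l₁.1 - l₂.1),
   l₁.1 * ((l₂.2 - l₁.2) / (l₁.1 - l₂.1)) + l₁.2)

/-- The point `p` lies strictly below the line `l` (the line is strictly above `p`). -/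
def Below (p : ℝ × ℝ) (l : ℝ × ℝ) : Prop := p.2 < l.1 * p.1 + l.2

/-- The point `p` lies strictly above the line `l` (the line is strictly below `p`). -/
def Above (p : ℝ × ℝ) (l : ℝ × ℝ) : Prop := p.2 > l.1 * p.1 + l.2

/-- A sequence of lines ordered by strictly increasing slope forms a cup: each
intermediate line lies strictly above the intersection of its two neighbours. -/
def IsCup {k : ℕ} (a : Fin k → ℝ × ℝ) : Prop :=
  StrictMono (fun i => (a i).1) ∧
  ∀ i : Fin k, ∀ _h1 : 0 < (i : ℕ), ∀ h2 : (i : ℕ) + 1 < k,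
    Below (interPt (a ⟨(i : ℕ) - 1, by omega⟩) (a ⟨(i : ℕ) + 1, h2⟩)) (a i)

/-- A sequence of lines ordered by strictly increasing slope forms a cap: each
intermediate line lies strictly below the intersection of its two neighbours. -/
def IsCap {k : ℕ} (a : Fin k → ℝ × ℝ) : Prop :=
  StrictMono (fun i => (a i).1) ∧
  ∀ i : Fin k, ∀ _h1 : 0 < (i : ℕ), ∀ h2 : (i : ℕ) + 1 < k,
    Above (interPt (a ⟨(i : ℕ) - 1, by omega⟩) (a ⟨(i : ℕ) + 1, h2⟩)) (a i)

/-- `F` contains `k` lines forming a `k`-cup. -/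
def HasCup (k : ℕ) (F : Finset (ℝ × ℝ)) : Prop :=
  ∃ a : Fin k → ℝ × ℝ, (∀ i, a i ∈ F) ∧ IsCup a

/-- `F` contains `l` lines forming an `l`-cap. -/
def HasCap (l : ℕ) (F : Finset (ℝ × ℝ)) : Prop :=
  ∃ a : Fin l → ℝ × ℝ, (∀ i, a i ∈ F) ∧ IsCap a

/-- Union of the lines of a family. -/
def linesUnion (F : Finset (ℝ × ℝ)) : Set (ℝ × ℝ) := ⋃ l ∈ F, lineSet l

/-- `P` is a cell of the arrangement of `F`: a connected component of the
complement of the union of the lines. -/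
def IsCellOf (F : Finset (ℝ × ℝ)) (P : Set (ℝ × ℝ)) : Prop :=
  ∃ p ∈ (linesUnion F)ᶜ, P = connectedComponentIn (linesUnion F)ᶜ p

/-- The line `l` contributes a (positive length) segment to the boundary of `P`:
the closure of `P` meets `l` in more than one point. -/
def Contributes (l : ℝ × ℝ) (P : Set (ℝ × ℝ)) : Prop :=
  ∃ p q : ℝ × ℝ, p ≠ q ∧ p ∈ closure P ∩ lineSet l ∧ q ∈ closure P ∩ lineSet l

/-- `P` is a cell of the arrangement of `F` with a boundary segment on every line of `F`. -/
def IsNCell (F : Finset (ℝ × ℝ)) (P : Set (ℝ × ℝ)) : Prop :=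
  IsCellOf F P ∧ ∀ l ∈ F, Contributes l P

/-- The lines of `F` are in convex position: they define a cell bounded by all of them. -/
def ConvexPos (F : Finset (ℝ × ℝ)) : Prop := ∃ P, IsNCell F P
/- ============ auxiliary development ============ -/

noncomputable def Sg (a b c : ℝ × ℝ) : ℝ :=
  (b.1 - a.1) * (c.2 - a.2) - (b.2 - a.2) * (c.1 - a.1)

lemma below_iff_sg {a b c : ℝ × ℝ} (h : a.1 < c.1) :
    Below (interPt a c) b ↔ Sg a b c < 0 := by
  have hne : a.1 - c.1 ≠ 0 := by linarith
  unfold Below interPt Sg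
  simp only
  have hX : (c.2 - a.2) / (a.1 - c.1) * (a.1 - c.1) = c.2 - a.2 := div_mul_cancel₀ _ hne
  set X := (c.2 - a.2) / (a.1 - c.1) with hXdef
  have keyeq : (b.1 - a.1) * (c.2 - a.2) - (b.2 - a.2) * (c.1 - a.1)
      = (a.1 - c.1) * ((b.1 - a.1) * X + (b.2 - a.2)) := by rw [← hX]; ring
  rw [keyeq]
  constructor
  · intro h'
    apply mul_neg_of_neg_of_pos (by linarith)
    linarith
  · intro h'
    by_contra hcon
    push_neg at hcon
    nlinarith [mul_nonneg (show (0:ℝ) ≤ c.1 - a.1 by linarith)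
      (show 0 ≤ -((b.1 - a.1) * X + (b.2 - a.2)) by linarith)]

lemma above_iff_sg {a b c : ℝ × ℝ} (h : a.1 < c.1) :
    Above (interPt a c) b ↔ 0 < Sg a b c := by
  have hne : a.1 - c.1 ≠ 0 := by linarith
  unfold Above interPt Sg
  simp only [gt_iff_lt]
  have hX : (c.2 - a.2) / (a.1 - c.1) * (a.1 - c.1) = c.2 - a.2 := div_mul_cancel₀ _ hne
  set X := (c.2 - a.2) / (a.1 - c.1) with hXdef
  have keyeq : (b.1 - a.1) * (c.2 - a.2) - (b.2 - a.2) * (c.1 - a.1)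
      = (a.1 - c.1) * ((b.1 - a.1) * X + (b.2 - a.2)) := by rw [← hX]; ring
  rw [keyeq]
  constructor
  · intro h'
    apply mul_pos_of_neg_of_neg (by linarith)
    linarith
  · intro h'
    by_contra hcon
    push_neg at hcon
    nlinarith [mul_nonneg (show (0:ℝ) ≤ c.1 - a.1 by linarith)
      (show 0 ≤ (b.1 - a.1) * X + (b.2 - a.2) by linarith)]

lemma concurrent_iff_sg {a b c : ℝ × ℝ} (hab : a.1 ≠ b.1) :
    (∃ p, p ∈ lineSet a ∧ p ∈ lineSet b ∧ p ∈ lineSet c) ↔ Sg a b c = 0 := by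
  have hne : a.1 - b.1 ≠ 0 := sub_ne_zero.mpr hab
  constructor
  · rintro ⟨p, h1, h2, h3⟩
    simp only [lineSet, mem_setOf_eq] at h1 h2 h3
    have hx : p.1 = (b.2 - a.2) / (a.1 - b.1) := by
      field_simp
      nlinarith [h1, h2]
    rw [hx] at h1 h3
    unfold Sg
    field_simp at h1 h3 ⊢
    nlinarith [h1, h3]
  · intro hs
    refine ⟨((b.2 - a.2) / (a.1 - b.1), a.1 * ((b.2 - a.2) / (a.1 - b.1)) + a.2), rfl, ?_, ?_⟩ <;>
      simp only [lineSet, mem_setOf_eq] <;> unfold Sg at hs <;> field_simp <;> nlinarith [hs]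

/-- σ-form of cup sequences. -/
def CupSeq (k : ℕ) (a : Fin k → ℝ × ℝ) : Prop :=
  StrictMono (fun i => (a i).1) ∧
  ∀ i : ℕ, ∀ h : i + 2 < k,
    Sg (a ⟨i, by omega⟩) (a ⟨i + 1, by omega⟩) (a ⟨i + 2, h⟩) < 0

def CapSeq (k : ℕ) (a : Fin k → ℝ × ℝ) : Prop :=
  StrictMono (fun i => (a i).1) ∧
  ∀ i : ℕ, ∀ h : i + 2 < k,
    0 < Sg (a ⟨i, by omega⟩) (a ⟨i + 1, by omega⟩) (a ⟨i + 2, h⟩)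

lemma isCup_iff {k : ℕ} (a : Fin k → ℝ × ℝ) : IsCup a ↔ CupSeq k a := by
  constructor
  · rintro ⟨hm, hc⟩
    refine ⟨hm, fun i h => ?_⟩
    have key := hc ⟨i + 1, by omega⟩ (by simp) (by simpa using h)
    have e : Below (interPt (a ⟨i, by omega⟩) (a ⟨i + 2, h⟩)) (a ⟨i + 1, by omega⟩) := by
      convert key using 3 <;> apply Fin.ext <;> simp
    rwa [below_iff_sg (hm (show (⟨i, by omega⟩ : Fin k) < ⟨i + 2, h⟩ by simp))] at e
  · rintro ⟨hm, hc⟩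
    refine ⟨hm, fun i h1 h2 => ?_⟩
    obtain ⟨j, hj⟩ : ∃ j : ℕ, (i : ℕ) = j + 1 := ⟨(i : ℕ) - 1, by omega⟩
    have key := hc j (by omega)
    rw [← below_iff_sg (hm (show (⟨j, by omega⟩ : Fin k) < ⟨j + 2, by omega⟩ by simp))] at key
    convert key using 3 <;> apply Fin.ext <;> simp only [Fin.val_mk] <;> omega

lemma isCap_iff {k : ℕ} (a : Fin k → ℝ × ℝ) : IsCap a ↔ CapSeq k a := by
  constructor
  · rintro ⟨hm, hc⟩
    refine ⟨hm, fun i h => ?_⟩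
    have key := hc ⟨i + 1, by omega⟩ (by simp) (by simpa using h)
    have e : Above (interPt (a ⟨i, by omega⟩) (a ⟨i + 2, h⟩)) (a ⟨i + 1, by omega⟩) := by
      convert key using 3 <;> apply Fin.ext <;> simp
    rwa [above_iff_sg (hm (show (⟨i, by omega⟩ : Fin k) < ⟨i + 2, h⟩ by simp))] at e
  · rintro ⟨hm, hc⟩
    refine ⟨hm, fun i h1 h2 => ?_⟩
    obtain ⟨j, hj⟩ : ∃ j : ℕ, (i : ℕ) = j + 1 := ⟨(i : ℕ) - 1, by omega⟩
    have key := hc j (by omega)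
    rw [← above_iff_sg (hm (show (⟨j, by omega⟩ : Fin k) < ⟨j + 2, by omega⟩ by simp))] at key
    convert key using 3 <;> apply Fin.ext <;> simp only [Fin.val_mk] <;> omega

/- ===== sequence helpers ===== -/

lemma fin_mono {n : ℕ} {f : Fin n → ℝ}
    (h : ∀ i : ℕ, ∀ hi : i + 1 < n, f ⟨i, by omega⟩ < f ⟨i + 1, hi⟩) :
    StrictMono f := by
  have key : ∀ m : ℕ, ∀ hm : m < n, ∀ i : Fin n, (i : ℕ) < m → f i < f ⟨m, hm⟩ := by
    intro m
    induction m with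
    | zero => intro hm i hi; omega
    | succ p ihp =>
      intro hm i hi
      rcases Nat.lt_or_ge (i : ℕ) p with h' | h'
      · exact (ihp (by omega) i h').trans (h p hm)
      · have hip : i = ⟨p, by omega⟩ := Fin.ext (by simp only [Fin.val_mk]; omega)
        rw [hip]; exact h p hm
  intro i j hij
  have := key (j : ℕ) j.2 i hij
  simpa using this

def CupIn (k : ℕ) (F : Finset (ℝ × ℝ)) : Prop :=
  ∃ a : Fin k → ℝ × ℝ, (∀ i, a i ∈ F) ∧ CupSeq k a

def CapIn (k : ℕ) (F : Finset (ℝ × ℝ)) : Prop :=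
  ∃ a : Fin k → ℝ × ℝ, (∀ i, a i ∈ F) ∧ CapSeq k a

lemma cupIn_mono {k : ℕ} {F G : Finset (ℝ × ℝ)} (h : F ⊆ G) : CupIn k F → CupIn k G :=
  fun ⟨a, ha, hc⟩ => ⟨a, fun i => h (ha i), hc⟩

lemma capIn_mono {k : ℕ} {F G : Finset (ℝ × ℝ)} (h : F ⊆ G) : CapIn k F → CapIn k G :=
  fun ⟨a, ha, hc⟩ => ⟨a, fun i => h (ha i), hc⟩

/-- append an element -/
def extR {k : ℕ} (a : Fin k → ℝ × ℝ) (x : ℝ × ℝ) : Fin (k + 1) → ℝ × ℝ :=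
  fun i => if h : (i : ℕ) < k then a ⟨i, h⟩ else x

/-- prepend an element -/
def extL {k : ℕ} (x : ℝ × ℝ) (a : Fin k → ℝ × ℝ) : Fin (k + 1) → ℝ × ℝ :=
  fun i => if h : 0 < (i : ℕ) then a ⟨(i : ℕ) - 1, by omega⟩ else x

lemma cupSeq_snoc {k' : ℕ} (a : Fin (k' + 2) → ℝ × ℝ) (ha : CupSeq (k' + 2) a) (x : ℝ × ℝ)
    (hx : (a ⟨k' + 1, by omega⟩).1 < x.1)
    (hs : Sg (a ⟨k', by omega⟩) (a ⟨k' + 1, by omega⟩) x < 0) :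
    CupSeq (k' + 2 + 1) (extR a x) := by
  have hk : 2 ≤ k' + 2 := by omega
  set k := k' + 2 with hkdef
  constructor
  · apply fin_mono
    intro i hi
    by_cases h1 : i + 1 < k
    · simp only [extR, Fin.val_mk, dif_pos (show i < k' + 2 by omega), dif_pos (show i + 1 < k' + 2 from h1)]
      exact ha.1 (show (⟨i, by omega⟩ : Fin k) < ⟨i + 1, h1⟩ from Fin.mk_lt_mk.mpr (by omega))
    · have hik : i = k' + 1 := by omega
      simp only [extR, Fin.val_mk, dif_pos (show i < k' + 2 by omega), dif_neg (show ¬ i + 1 < k' + 2 by omega)]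
      subst hik
      exact hx
  · intro i hi
    by_cases h2 : i + 2 < k
    · simp only [extR, Fin.val_mk, dif_pos (show i < k' + 2 by omega),
        dif_pos (show i + 1 < k' + 2 by omega), dif_pos (show i + 2 < k' + 2 from h2)]
      exact ha.2 i h2
    · have hik : i = k' := by omega
      simp only [extR, Fin.val_mk, dif_pos (show i < k' + 2 by omega),
        dif_pos (show i + 1 < k' + 2 by omega), dif_neg (show ¬ i + 2 < k' + 2 by omega)]
      subst hik
      convert hs using 3 <;> apply Fin.ext <;> simp only [Fin.val_mk] <;> omega

lemma capSeq_cons {k' : ℕ} (a : Fin (k' + 2) → ℝ × ℝ) (ha : CapSeq (k' + 2) a) (x : ℝ × ℝ)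
    (hx : x.1 < (a ⟨0, by omega⟩).1)
    (hs : 0 < Sg x (a ⟨0, by omega⟩) (a ⟨1, by omega⟩)) :
    CapSeq (k' + 2 + 1) (extL x a) := by
  have hk : 2 ≤ k' + 2 := by omega
  set k := k' + 2 with hkdef
  constructor
  · apply fin_mono
    intro i hi
    by_cases h1 : 0 < i
    · simp only [extL, Fin.val_mk, dif_pos (show 0 < i + 1 by omega), dif_pos h1]
      exact ha.1 (show (⟨i - 1, by omega⟩ : Fin k) < ⟨i + 1 - 1, by omega⟩ from
        Fin.mk_lt_mk.mpr (by omega))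
    · have hik : i = 0 := by omega
      subst hik
      simp only [extL, Fin.val_mk, dif_pos (show (0:ℕ) < 0 + 1 by omega), dif_neg (lt_irrefl 0)]
      convert hx using 2
  · intro i hi
    by_cases h1 : 0 < i
    · simp only [extL, Fin.val_mk, dif_pos h1, dif_pos (show 0 < i + 1 by omega),
        dif_pos (show 0 < i + 2 by omega)]
      have := ha.2 (i - 1) (by omega)
      convert this using 3 <;> apply Fin.ext <;> simp only [Fin.val_mk] <;> omega
    · have hik : i = 0 := by omega
      subst hik
      simp only [extL, Fin.val_mk, dif_neg (lt_irrefl 0), dif_pos (show (0:ℕ) < 0 + 1 by omega),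
        dif_pos (show (0:ℕ) < 0 + 2 by omega)]
      convert hs using 3 <;> apply Fin.ext <;> simp only [Fin.val_mk]

lemma pair_cup {F : Finset (ℝ × ℝ)} {x y : ℝ × ℝ} (hx : x ∈ F) (hy : y ∈ F)
    (hxy : x.1 < y.1) : CupIn 2 F := by
  refine ⟨fun i => if (i : ℕ) = 0 then x else y, fun i => by dsimp only; split <;> assumption, ?_, ?_⟩
  · apply fin_mono
    intro i hi
    have : i = 0 := by omega
    subst this
    simpa using hxy
  · intro i hi; omega

lemma pair_cap {F : Finset (ℝ × ℝ)} {x y : ℝ × ℝ} (hx : x ∈ F) (hy : y ∈ F)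
    (hxy : x.1 < y.1) : CapIn 2 F := by
  refine ⟨fun i => if (i : ℕ) = 0 then x else y, fun i => by dsimp only; split <;> assumption, ?_, ?_⟩
  · apply fin_mono
    intro i hi
    have : i = 0 := by omega
    subst this
    simpa using hxy
  · intro i hi; omega

theorem es_ub : ∀ n k l : ℕ, k + l ≤ n → 2 ≤ k → 2 ≤ l →
    ∀ F : Finset (ℝ × ℝ),
    (∀ a ∈ F, ∀ b ∈ F, ∀ c ∈ F, a.1 < b.1 → b.1 < c.1 → Sg a b c ≠ 0) →
    (∀ a ∈ F, ∀ b ∈ F, a ≠ b → a.1 ≠ b.1) →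
    Nat.choose (k + l - 4) (k - 2) + 1 ≤ F.card →
    CupIn k F ∨ CapIn l F := by
  intro n
  induction n with
  | zero => intro k l h hk hl; omega
  | succ n ih =>
    intro k l hn hk hl F hsg hslope hcard
    -- helper to extract two lines with increasing slopes from a 2-element bound
    have two_of_card : 2 ≤ F.card → ∃ x ∈ F, ∃ y ∈ F, x.1 < y.1 := by
      intro h2
      obtain ⟨x, hx, y, hy, hxy⟩ := Finset.one_lt_card.mp h2
      rcases lt_trichotomy x.1 y.1 with h | h | h
      · exact ⟨x, hx, y, hy, h⟩
      · exact absurd h (hslope x hx y hy hxy)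
      · exact ⟨y, hy, x, hx, h⟩
    by_cases hk2 : k = 2
    · subst hk2
      obtain ⟨x, hx, y, hy, hxy⟩ := two_of_card (by simpa using hcard)
      exact Or.inl (pair_cup hx hy hxy)
    by_cases hl2 : l = 2
    · subst hl2
      obtain ⟨x, hx, y, hy, hxy⟩ := two_of_card (by
        have : Nat.choose (k + 2 - 4) (k - 2) = 1 := by
          have e : k + 2 - 4 = k - 2 := by omega
          rw [e, Nat.choose_self]
        omega)
      exact Or.inr (pair_cap hx hy hxy)
    obtain ⟨k', rfl⟩ : ∃ k', k = k' + 3 := ⟨k - 3, by omega⟩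
    obtain ⟨l', rfl⟩ : ∃ l', l = l' + 3 := ⟨l - 3, by omega⟩
    clear hk2 hl2 hk hl
    classical
    set T := F.filter (fun x => ∃ c : Fin (k' + 2) → ℝ × ℝ,
      (∀ i, c i ∈ F) ∧ CupSeq (k' + 2) c ∧ c ⟨k' + 1, by omega⟩ = x) with hT
    have hTsub : T ⊆ F := Finset.filter_subset _ _
    have pascal : Nat.choose (k' + 3 + (l' + 3) - 4) (k' + 3 - 2) =
        Nat.choose (k' + l' + 1) k' + Nat.choose (k' + l' + 1) (k' + 1) := by
      have e1 : k' + 3 + (l' + 3) - 4 = (k' + l' + 1) + 1 := by omega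
      have e2 : k' + 3 - 2 = k' + 1 := by omega
      rw [e1, e2, Nat.choose_succ_succ]
    -- restrict hypotheses to subsets
    have hsub_sg : ∀ G : Finset (ℝ × ℝ), G ⊆ F →
        (∀ a ∈ G, ∀ b ∈ G, ∀ c ∈ G, a.1 < b.1 → b.1 < c.1 → Sg a b c ≠ 0) :=
      fun G hG a ha b hb c hc => hsg a (hG ha) b (hG hb) c (hG hc)
    have hsub_slope : ∀ G : Finset (ℝ × ℝ), G ⊆ F →
        (∀ a ∈ G, ∀ b ∈ G, a ≠ b → a.1 ≠ b.1) :=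
      fun G hG a ha b hb => hslope a (hG ha) b (hG hb)
    rcases le_or_gt (F \ T).card (Nat.choose (k' + l' + 1) k') with hFT | hFT
    · -- T is big
      have hTcard : Nat.choose (k' + 3 + (l' + 2) - 4) (k' + 3 - 2) + 1 ≤ T.card := by
        have hcards := Finset.card_sdiff_add_card_eq_card hTsub
        have e : k' + 3 + (l' + 2) - 4 = k' + l' + 1 := by omega
        have e2 : k' + 3 - 2 = k' + 1 := by omega
        rw [e, e2]
        omega
      rcases ih (k' + 3) (l' + 2) (by omega) (by omega) (by omega) T
        (hsub_sg _ hTsub) (hsub_slope _ hTsub) hTcard with hcup | hcap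
      · exact Or.inl (cupIn_mono hTsub hcup)
      · obtain ⟨b, hbT, hbseq⟩ := hcap
        have hb0 : b ⟨0, by omega⟩ ∈ T := hbT _
        rw [hT, Finset.mem_filter] at hb0
        obtain ⟨hb0F, c, hcF, hcseq, hclast⟩ := hb0
        set x1 := c ⟨k', by omega⟩ with hx1
        set x3 := b ⟨1, by omega⟩ with hx3
        have hbF : ∀ i, b i ∈ F := fun i => hTsub (hbT i)
        have h12 : x1.1 < (b ⟨0, by omega⟩).1 := by
          rw [← hclast]
          exact hcseq.1 (Fin.mk_lt_mk.mpr (by omega))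
        have h23 : (b ⟨0, by omega⟩).1 < x3.1 := hbseq.1 (Fin.mk_lt_mk.mpr (by omega))
        have hsne := hsg x1 (hcF _) (b ⟨0, by omega⟩) hb0F x3 (hbF _) h12 h23
        rcases hsne.lt_or_gt with hneg | hpos
        · left
          refine ⟨extR c x3, fun i => ?_, ?_⟩
          · unfold extR
            split
            · exact hcF _
            · exact hbF _
          · have hlastx : (c ⟨k' + 1, by omega⟩).1 < x3.1 := by rw [hclast]; exact h23
            have hsg' : Sg (c ⟨k', by omega⟩) (c ⟨k' + 1, by omega⟩) x3 < 0 := by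
              rw [hclast]; exact hneg
            exact cupSeq_snoc c hcseq x3 hlastx hsg'
        · right
          refine ⟨extL x1 b, fun i => ?_, ?_⟩
          · unfold extL
            split
            · exact hbF _
            · exact hcF _
          · exact capSeq_cons b hbseq x1 h12 hpos
    · -- F \ T is big
      rcases ih (k' + 2) (l' + 3) (by omega) (by omega) (by omega) (F \ T)
        (hsub_sg _ Finset.sdiff_subset) (hsub_slope _ Finset.sdiff_subset)
        (by
          have e : k' + 2 + (l' + 3) - 4 = k' + l' + 1 := by omega
          have e2 : k' + 2 - 2 = k' := by omega
          rw [e, e2]; omega) with hcup | hcap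
      · exfalso
        obtain ⟨a, haF, haseq⟩ := hcup
        have hlast : a ⟨k' + 1, by omega⟩ ∈ F \ T := haF _
        rw [Finset.mem_sdiff] at hlast
        exact hlast.2 (by
          rw [hT, Finset.mem_filter]
          exact ⟨hlast.1, a, fun i => (Finset.mem_sdiff.mp (haF i)).1, haseq, rfl⟩)
      · exact Or.inr (capIn_mono Finset.sdiff_subset hcap)

/- ===== helpers for the construction ===== -/

lemma exists_bound {α : Type*} (s : Finset α) (f : α → ℝ) : ∃ M, ∀ x ∈ s, f x < M := by
  obtain ⟨M, hM⟩ := (s.finite_toSet.image f).bddAbove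
  refine ⟨M + 1, fun x hx => ?_⟩
  have := hM (Set.mem_image_of_mem f (by simpa using hx))
  linarith

def tr (s H : ℝ) (p : ℝ × ℝ) : ℝ × ℝ := (p.1 + s, p.2 + H)

lemma Sg_tr (s H : ℝ) (a b c : ℝ × ℝ) : Sg (tr s H a) (tr s H b) (tr s H c) = Sg a b c := by
  unfold Sg tr; dsimp only; ring

lemma tr_inj (s H : ℝ) : Function.Injective (tr s H) := by
  intro p q h
  unfold tr at h
  have h1 := congrArg Prod.fst h
  have h2 := congrArg Prod.snd h
  dsimp only at h1 h2
  ext <;> linarith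

lemma cupIn_tr_of {m : ℕ} {G : Finset (ℝ × ℝ)} (s H : ℝ) :
    CupIn m G → CupIn m (G.image (tr s H)) := by
  rintro ⟨a, ha, hmono, hsg⟩
  refine ⟨fun i => tr s H (a i), fun i => Finset.mem_image_of_mem _ (ha i), ?_, ?_⟩
  · intro i j hij
    have := hmono hij
    simp only [tr] at this ⊢
    linarith
  · intro i hi
    rw [Sg_tr]
    exact hsg i hi

lemma capIn_tr_of {m : ℕ} {G : Finset (ℝ × ℝ)} (s H : ℝ) :
    CapIn m G → CapIn m (G.image (tr s H)) := by
  rintro ⟨a, ha, hmono, hsg⟩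
  refine ⟨fun i => tr s H (a i), fun i => Finset.mem_image_of_mem _ (ha i), ?_, ?_⟩
  · intro i j hij
    have := hmono hij
    simp only [tr] at this ⊢
    linarith
  · intro i hi
    rw [Sg_tr]
    exact hsg i hi

lemma tr_tr_cancel (s H : ℝ) (G : Finset (ℝ × ℝ)) :
    (G.image (tr s H)).image (tr (-s) (-H)) = G := by
  rw [Finset.image_image]
  have : tr (-s) (-H) ∘ tr s H = id := by
    funext p
    simp only [Function.comp_apply, tr, id_eq]
    ext <;> dsimp <;> ring
  rw [this, Finset.image_id]

lemma cupIn_tr_iff {m : ℕ} {G : Finset (ℝ × ℝ)} (s H : ℝ) :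
    CupIn m (G.image (tr s H)) ↔ CupIn m G := by
  constructor
  · intro h
    have := cupIn_tr_of (-s) (-H) h
    rwa [tr_tr_cancel] at this
  · exact cupIn_tr_of s H

lemma capIn_tr_iff {m : ℕ} {G : Finset (ℝ × ℝ)} (s H : ℝ) :
    CapIn m (G.image (tr s H)) ↔ CapIn m G := by
  constructor
  · intro h
    have := capIn_tr_of (-s) (-H) h
    rwa [tr_tr_cancel] at this
  · exact capIn_tr_of s H

lemma cupSeq_restrict {m d r : ℕ} (a : Fin m → ℝ × ℝ) (h : CupSeq m a) (hdr : d + r ≤ m) :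
    CupSeq r (fun i : Fin r => a ⟨d + (i : ℕ), by omega⟩) := by
  constructor
  · apply fin_mono
    intro i hi
    exact h.1 (Fin.mk_lt_mk.mpr (by simp only [Fin.val_mk]; omega))
  · intro i hi
    have := h.2 (d + i) (by omega)
    convert this using 3 <;> apply Fin.ext <;> simp only [Fin.val_mk] <;> omega

lemma capSeq_restrict {m d r : ℕ} (a : Fin m → ℝ × ℝ) (h : CapSeq m a) (hdr : d + r ≤ m) :
    CapSeq r (fun i : Fin r => a ⟨d + (i : ℕ), by omega⟩) := by
  constructor
  · apply fin_mono
    intro i hi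
    exact h.1 (Fin.mk_lt_mk.mpr (by simp only [Fin.val_mk]; omega))
  · intro i hi
    have := h.2 (d + i) (by omega)
    convert this using 3 <;> apply Fin.ext <;> simp only [Fin.val_mk] <;> omega

theorem es_constr : ∀ n k l : ℕ, k + l ≤ n → 2 ≤ k → 2 ≤ l →
    ∃ F : Finset (ℝ × ℝ),
      F.card = Nat.choose (k + l - 4) (k - 2) ∧
      (∀ a ∈ F, ∀ b ∈ F, a ≠ b → a.1 ≠ b.1) ∧
      (∀ a ∈ F, ∀ b ∈ F, ∀ c ∈ F, a.1 < b.1 → b.1 < c.1 → Sg a b c ≠ 0) ∧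
      ¬ CupIn k F ∧ ¬ CapIn l F := by
  intro n
  induction n with
  | zero => intro k l h hk hl; omega
  | succ n ih =>
    intro k l hn hk hl
    -- singleton base case
    have base : ∀ m : ℕ, 2 ≤ m → ∀ m' : ℕ, 2 ≤ m' →
        ¬ CupIn m {((0 : ℝ), (0 : ℝ))} ∧ ¬ CapIn m' {((0 : ℝ), (0 : ℝ))} := by
      intro m hm m' hm'
      constructor
      · rintro ⟨a, ha, hmono, -⟩
        have h0 := Finset.mem_singleton.mp (ha ⟨0, by omega⟩)
        have h1 := Finset.mem_singleton.mp (ha ⟨1, by omega⟩)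
        have := hmono (show (⟨0, by omega⟩ : Fin m) < ⟨1, by omega⟩ from Fin.mk_lt_mk.mpr (by omega))
        dsimp only at this
        rw [h0, h1] at this
        exact lt_irrefl _ this
      · rintro ⟨a, ha, hmono, -⟩
        have h0 := Finset.mem_singleton.mp (ha ⟨0, by omega⟩)
        have h1 := Finset.mem_singleton.mp (ha ⟨1, by omega⟩)
        have := hmono (show (⟨0, by omega⟩ : Fin m') < ⟨1, by omega⟩ from Fin.mk_lt_mk.mpr (by omega))
        dsimp only at this
        rw [h0, h1] at this
        exact lt_irrefl _ this
    by_cases hk2 : k = 2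
    · subst hk2
      refine ⟨{((0 : ℝ), (0 : ℝ))}, ?_, ?_, ?_, (base 2 le_rfl l hl).1, (base 2 le_rfl l hl).2⟩
      · simp
      · intro a ha b hb hab
        rw [Finset.mem_singleton.mp ha, Finset.mem_singleton.mp hb] at hab
        exact absurd rfl hab
      · intro a ha b hb c hc h1 h2
        rw [Finset.mem_singleton.mp ha, Finset.mem_singleton.mp hb] at h1
        exact absurd h1 (lt_irrefl _)
    by_cases hl2 : l = 2
    · subst hl2
      refine ⟨{((0 : ℝ), (0 : ℝ))}, ?_, ?_, ?_, (base k hk 2 le_rfl).1, (base k hk 2 le_rfl).2⟩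
      · have e : k + 2 - 4 = k - 2 := by omega
        rw [e, Nat.choose_self]
        simp
      · intro a ha b hb hab
        rw [Finset.mem_singleton.mp ha, Finset.mem_singleton.mp hb] at hab
        exact absurd rfl hab
      · intro a ha b hb c hc h1 h2
        rw [Finset.mem_singleton.mp ha, Finset.mem_singleton.mp hb] at h1
        exact absurd h1 (lt_irrefl _)
    obtain ⟨k', rfl⟩ : ∃ k', k = k' + 3 := ⟨k - 3, by omega⟩
    obtain ⟨l', rfl⟩ : ∃ l', l = l' + 3 := ⟨l - 3, by omega⟩
    clear hk2 hl2 hk hl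
    obtain ⟨X, hXcard, hXslope, hXsg, hXnocup, hXnocap⟩ :=
      ih (k' + 3) (l' + 2) (by omega) (by omega) (by omega)
    obtain ⟨Y₀, hYcard, hYslope, hYsg, hYnocup, hYnocap⟩ :=
      ih (k' + 2) (l' + 3) (by omega) (by omega) (by omega)
    -- choose the horizontal shift
    obtain ⟨M1, hM1⟩ := exists_bound X Prod.fst
    obtain ⟨M2, hM2⟩ := exists_bound Y₀ (fun q => -q.1)
    set s := M1 + M2 with hs
    have hsep0 : ∀ p ∈ X, ∀ q ∈ Y₀, p.1 < q.1 + s := by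
      intro p hp q hq
      have := hM1 p hp
      have := hM2 q hq
      dsimp at *
      linarith
    -- choose the vertical shift
    obtain ⟨H1, hH1⟩ := exists_bound (X ×ˢ X ×ˢ Y₀) (fun t =>
      ((t.2.1.2 - t.1.2) * (t.2.2.1 + s - t.1.1)) / (t.2.1.1 - t.1.1) - t.2.2.2 + t.1.2)
    obtain ⟨H2, hH2⟩ := exists_bound (X ×ˢ Y₀ ×ˢ Y₀) (fun t =>
      ((t.2.1.1 + s - t.1.1) * (t.2.2.2 - t.1.2) - (t.2.1.2 - t.1.2) * (t.2.2.1 + s - t.1.1)) /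
        (t.2.2.1 - t.2.1.1))
    set H := max H1 H2 with hH
    set Y := Y₀.image (tr s H) with hY
    -- separation of slopes
    have hsep : ∀ p ∈ X, ∀ q ∈ Y, p.1 < q.1 := by
      intro p hp q hq
      obtain ⟨q₀, hq₀, rfl⟩ := Finset.mem_image.mp hq
      exact hsep0 p hp q₀ hq₀
    have hdisj : ∀ p, p ∈ X → p ∈ Y → False := fun p hpX hpY => lt_irrefl _ (hsep p hpX p hpY)
    -- the two sign conditions
    have cond2 : ∀ p ∈ X, ∀ q ∈ X, ∀ r ∈ Y, p.1 < q.1 → 0 < Sg p q r := by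
      intro p hp q hq r hr hpq
      obtain ⟨r₀, hr₀, rfl⟩ := Finset.mem_image.mp hr
      have hb := hH1 (p, q, r₀) (by simp [Finset.mem_product, hp, hq, hr₀])
      have h1 : H1 ≤ H := le_max_left _ _
      dsimp only at hb
      have hb' : (q.2 - p.2) * (r₀.1 + s - p.1) / (q.1 - p.1) < H + r₀.2 - p.2 := by linarith
      rw [div_lt_iff₀ (by linarith : (0:ℝ) < q.1 - p.1)] at hb'
      unfold Sg tr
      dsimp only
      nlinarith [hb']
    have cond3 : ∀ p ∈ X, ∀ q ∈ Y, ∀ r ∈ Y, q.1 < r.1 → Sg p q r < 0 := by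
      intro p hp q hq r hr hqr
      obtain ⟨q₀, hq₀, rfl⟩ := Finset.mem_image.mp hq
      obtain ⟨r₀, hr₀, rfl⟩ := Finset.mem_image.mp hr
      have hb := hH2 (p, q₀, r₀) (by simp [Finset.mem_product, hp, hq₀, hr₀])
      have h2 : H2 ≤ H := le_max_right _ _
      dsimp only at hb
      have hqr' : q₀.1 < r₀.1 := by
        simp only [tr] at hqr
        linarith
      have hb' := lt_of_lt_of_le hb h2
      rw [div_lt_iff₀ (by linarith : (0:ℝ) < r₀.1 - q₀.1)] at hb'
      unfold Sg tr
      dsimp only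
      nlinarith [hb']
    set F := X ∪ Y with hF
    have hXsub : X ⊆ F := Finset.subset_union_left
    have hYsub : Y ⊆ F := Finset.subset_union_right
    have hdj : Disjoint X Y := Finset.disjoint_left.mpr (fun {p} hp hq => (hdisj p hp hq).elim)
    refine ⟨F, ?_, ?_, ?_, ?_, ?_⟩
    · -- cardinality
      rw [hF, Finset.card_union_of_disjoint hdj, hXcard,
        Finset.card_image_of_injective _ (tr_inj s H), hYcard]
      have e1 : k' + 3 + (l' + 3) - 4 = (k' + l' + 1) + 1 := by omega
      have e2 : k' + 3 - 2 = k' + 1 := by omega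
      have e3 : k' + 3 + (l' + 2) - 4 = k' + l' + 1 := by omega
      have e4 : k' + 2 + (l' + 3) - 4 = k' + l' + 1 := by omega
      have e5 : k' + 2 - 2 = k' := by omega
      rw [e1, e2, e3, e4, e5, Nat.choose_succ_succ (k' + l' + 1) k']
      simp only [Nat.succ_eq_add_one]
      omega
    · -- distinct slopes
      intro a ha b hb hab
      rcases Finset.mem_union.mp ha with haX | haY <;> rcases Finset.mem_union.mp hb with hbX | hbY
      · exact hXslope a haX b hbX hab
      · exact ne_of_lt (hsep a haX b hbY)
      · exact (ne_of_lt (hsep b hbX a haY)).symm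
      · obtain ⟨a₀, ha₀, rfl⟩ := Finset.mem_image.mp haY
        obtain ⟨b₀, hb₀, rfl⟩ := Finset.mem_image.mp hbY
        have hne : a₀ ≠ b₀ := fun h => hab (by rw [h])
        have := hYslope a₀ ha₀ b₀ hb₀ hne
        simp only [tr]
        intro h
        exact this (by linarith)
    · -- no vanishing Sg
      intro a ha b hb c hc h1 h2
      rcases Finset.mem_union.mp ha with haX | haY
      · rcases Finset.mem_union.mp hb with hbX | hbY
        · rcases Finset.mem_union.mp hc with hcX | hcY
          · exact hXsg a haX b hbX c hcX h1 h2
          · exact (cond2 a haX b hbX c hcY h1).ne'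
        · rcases Finset.mem_union.mp hc with hcX | hcY
          · exact absurd (hsep c hcX b hbY) (by linarith)
          · exact (cond3 a haX b hbY c hcY h2).ne
      · rcases Finset.mem_union.mp hb with hbX | hbY
        · exact absurd (hsep b hbX a haY) (by linarith)
        · rcases Finset.mem_union.mp hc with hcX | hcY
          · exact absurd (hsep c hcX a haY) (by linarith)
          · obtain ⟨a₀, ha₀, rfl⟩ := Finset.mem_image.mp haY
            obtain ⟨b₀, hb₀, rfl⟩ := Finset.mem_image.mp hbY
            obtain ⟨c₀, hc₀, rfl⟩ := Finset.mem_image.mp hcY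
            rw [Sg_tr]
            simp only [tr] at h1 h2
            exact hYsg a₀ ha₀ b₀ hb₀ c₀ hc₀ (by linarith) (by linarith)
    · -- no (k'+3)-cup
      rintro ⟨a, haF, haseq⟩
      have memmono : ∀ i j : Fin (k' + 3), i ≤ j → a j ∈ X → a i ∈ X := by
        intro i j hij hjX
        rcases Finset.mem_union.mp (haF i) with h | h
        · exact h
        · exfalso
          have hgt := hsep (a j) hjX (a i) h
          have hle : (a i).1 ≤ (a j).1 := haseq.1.monotone hij
          linarith
      by_cases h1 : a ⟨1, by omega⟩ ∈ X
      · by_cases hlast : a ⟨k' + 2, by omega⟩ ∈ X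
        · exact hXnocup ⟨a, fun i => memmono i ⟨k' + 2, by omega⟩
            (by rw [Fin.le_def]; simp only [Fin.val_mk]; omega) hlast, haseq⟩
        · have hlastY : a ⟨k' + 2, by omega⟩ ∈ Y :=
            (Finset.mem_union.mp (haF _)).resolve_left hlast
          have hex : ∃ j : ℕ, ∃ hj : j < k' + 3, a ⟨j, hj⟩ ∈ Y := ⟨k' + 2, by omega, hlastY⟩
          classical
          obtain ⟨hjlt, hjY⟩ := Nat.find_spec hex
          set j := Nat.find hex with hjdef
          have hj2 : 2 ≤ j := by
            by_contra hcon
            push_neg at hcon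
            have : a ⟨j, hjlt⟩ ∈ X := memmono ⟨j, hjlt⟩ ⟨1, by omega⟩
              (by rw [Fin.le_def]; simp only [Fin.val_mk]; omega) h1
            exact hdisj _ this hjY
          have hprev1 : a ⟨j - 1, by omega⟩ ∈ X := by
            rcases Finset.mem_union.mp (haF ⟨j - 1, by omega⟩) with h | h
            · exact h
            · exact absurd (⟨by omega, h⟩ : ∃ hj : j - 1 < k' + 3, a ⟨j - 1, hj⟩ ∈ Y)
                (Nat.find_min hex (by omega))
          have hprev2 : a ⟨j - 2, by omega⟩ ∈ X := by
            rcases Finset.mem_union.mp (haF ⟨j - 2, by omega⟩) with h | h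
            · exact h
            · exact absurd (⟨by omega, h⟩ : ∃ hj : j - 2 < k' + 3, a ⟨j - 2, hj⟩ ∈ Y)
                (Nat.find_min hex (by omega))
          have htrip := haseq.2 (j - 2) (by omega)
          have hslope12 : (a ⟨j - 2, by omega⟩).1 < (a ⟨j - 1, by omega⟩).1 :=
            haseq.1 (Fin.mk_lt_mk.mpr (by omega))
          have hpos := cond2 _ hprev2 _ hprev1 _ hjY hslope12
          have hneg : Sg (a ⟨j - 2, by omega⟩) (a ⟨j - 1, by omega⟩) (a ⟨j, hjlt⟩) < 0 := by
            convert htrip using 3 <;> apply Fin.ext <;> simp only [Fin.val_mk] <;> omega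
          linarith
      · apply hYnocup
        rw [← cupIn_tr_iff s H]
        refine ⟨fun i : Fin (k' + 2) => a ⟨1 + (i : ℕ), by omega⟩, ?_,
          cupSeq_restrict a haseq (by omega)⟩
        intro i
        rcases Finset.mem_union.mp (haF ⟨1 + (i : ℕ), by omega⟩) with h | h
        · exact absurd (memmono ⟨1, by omega⟩ ⟨1 + (i : ℕ), by omega⟩
            (by rw [Fin.le_def]; simp only [Fin.val_mk]; omega) h) h1
        · exact h
    · -- no (l'+3)-cap
      rintro ⟨a, haF, haseq⟩
      have memmono : ∀ i j : Fin (l' + 3), i ≤ j → a j ∈ X → a i ∈ X := by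
        intro i j hij hjX
        rcases Finset.mem_union.mp (haF i) with h | h
        · exact h
        · exfalso
          have hgt := hsep (a j) hjX (a i) h
          have hle : (a i).1 ≤ (a j).1 := haseq.1.monotone hij
          linarith
      by_cases hsl : a ⟨l' + 1, by omega⟩ ∈ X
      · apply hXnocap
        refine ⟨fun i : Fin (l' + 2) => a ⟨0 + (i : ℕ), by omega⟩, ?_,
          capSeq_restrict a haseq (by omega)⟩
        intro i
        exact memmono ⟨0 + (i : ℕ), by omega⟩ ⟨l' + 1, by omega⟩
          (by rw [Fin.le_def]; simp only [Fin.val_mk]; omega) hsl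
      · have hslY : a ⟨l' + 1, by omega⟩ ∈ Y :=
          (Finset.mem_union.mp (haF _)).resolve_left hsl
        by_cases h0 : a ⟨0, by omega⟩ ∈ X
        · have hex : ∃ j : ℕ, ∃ hj : j < l' + 3, a ⟨j, hj⟩ ∈ Y := ⟨l' + 1, by omega, hslY⟩
          classical
          obtain ⟨hjlt, hjY⟩ := Nat.find_spec hex
          set j := Nat.find hex with hjdef
          have hjle : j ≤ l' + 1 := Nat.find_min' hex ⟨by omega, hslY⟩
          have hj1 : 1 ≤ j := by
            by_contra hcon
            push_neg at hcon
            have hj0 : j = 0 := by omega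
            have : a ⟨j, hjlt⟩ ∈ X := by
              have : (⟨j, hjlt⟩ : Fin (l' + 3)) = ⟨0, by omega⟩ := Fin.ext (by
                simp only [Fin.val_mk]; omega)
              rw [this]; exact h0
            exact hdisj _ this hjY
          have hprev : a ⟨j - 1, by omega⟩ ∈ X := by
            rcases Finset.mem_union.mp (haF ⟨j - 1, by omega⟩) with h | h
            · exact h
            · exact absurd (⟨by omega, h⟩ : ∃ hj : j - 1 < l' + 3, a ⟨j - 1, hj⟩ ∈ Y)
                (Nat.find_min hex (by omega))
          have hnext : a ⟨j + 1, by omega⟩ ∈ Y := by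
            rcases Finset.mem_union.mp (haF ⟨j + 1, by omega⟩) with h | h
            · exact absurd (memmono ⟨j, by omega⟩ ⟨j + 1, by omega⟩
                (by rw [Fin.le_def]; simp only [Fin.val_mk]; omega) h)
                (fun hc => hdisj _ hc hjY)
            · exact h
          have htrip := haseq.2 (j - 1) (by omega)
          have hslope23 : (a ⟨j, hjlt⟩).1 < (a ⟨j + 1, by omega⟩).1 :=
            haseq.1 (Fin.mk_lt_mk.mpr (by omega))
          have hneg := cond3 _ hprev _ hjY _ hnext hslope23
          have hpos : 0 < Sg (a ⟨j - 1, by omega⟩) (a ⟨j, hjlt⟩) (a ⟨j + 1, by omega⟩) := by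
            convert htrip using 3 <;> apply Fin.ext <;> simp only [Fin.val_mk] <;> omega
          linarith
        · have h0Y : a ⟨0, by omega⟩ ∈ Y := (Finset.mem_union.mp (haF _)).resolve_left h0
          apply hYnocap
          rw [← capIn_tr_iff s H]
          refine ⟨fun i : Fin (l' + 3) => a ⟨0 + (i : ℕ), by omega⟩, ?_,
            capSeq_restrict a haseq (by omega)⟩
          intro i
          rcases Finset.mem_union.mp (haF ⟨0 + (i : ℕ), by omega⟩) with h | h
          · exact absurd (memmono ⟨0, by omega⟩ ⟨0 + (i : ℕ), by omega⟩
              (by rw [Fin.le_def]; simp only [Fin.val_mk]; omega) h) h0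
          · exact h

lemma hasCup_iff (k : ℕ) (F : Finset (ℝ × ℝ)) : HasCup k F ↔ CupIn k F :=
  exists_congr fun a => and_congr_right fun _ => isCup_iff a

lemma hasCap_iff (k : ℕ) (F : Finset (ℝ × ℝ)) : HasCap k F ↔ CapIn k F :=
  exists_congr fun a => and_congr_right fun _ => isCap_iff a

lemma genpos_of (F : Finset (ℝ × ℝ))
    (h1 : ∀ a ∈ F, ∀ b ∈ F, a ≠ b → a.1 ≠ b.1)
    (hsg : ∀ a ∈ F, ∀ b ∈ F, ∀ c ∈ F, a.1 < b.1 → b.1 < c.1 → Sg a b c ≠ 0) :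
    GenPos F := by
  refine ⟨h1, ?_⟩
  rintro l₁ h₁ l₂ h₂ l₃ h₃ h12 h13 h23 ⟨p, hp1, hp2, hp3⟩
  have key : ∀ x ∈ F, ∀ y ∈ F, ∀ z ∈ F, x.1 < y.1 → y.1 < z.1 →
      p ∈ lineSet x → p ∈ lineSet y → p ∈ lineSet z → False := by
    intro x hx y hy z hz hxy hyz px py pz
    exact hsg x hx y hy z hz hxy hyz ((concurrent_iff_sg (ne_of_lt hxy)).mp ⟨p, px, py, pz⟩)
  have d12 := h1 l₁ h₁ l₂ h₂ h12
  have d13 := h1 l₁ h₁ l₃ h₃ h13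
  have d23 := h1 l₂ h₂ l₃ h₃ h23
  rcases d12.lt_or_gt with a | a <;> rcases d13.lt_or_gt with b | b <;>
    rcases d23.lt_or_gt with c | c <;>
    first
    | exact key l₁ h₁ l₂ h₂ l₃ h₃ (by linarith) (by linarith) hp1 hp2 hp3
    | exact key l₁ h₁ l₃ h₃ l₂ h₂ (by linarith) (by linarith) hp1 hp3 hp2
    | exact key l₂ h₂ l₁ h₁ l₃ h₃ (by linarith) (by linarith) hp2 hp1 hp3
    | exact key l₂ h₂ l₃ h₃ l₁ h₁ (by linarith) (by linarith) hp2 hp3 hp1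
    | exact key l₃ h₃ l₁ h₁ l₂ h₂ (by linarith) (by linarith) hp3 hp1 hp2
    | exact key l₃ h₃ l₂ h₂ l₁ h₁ (by linarith) (by linarith) hp3 hp2 hp1
    | linarith


/-- The cup-cap function for lines: f(k, l) = C(k + l - 4, k - 2) + 1. -/
theorem stmt7 (k l : ℕ) (hk : 2 ≤ k) (hl : 2 ≤ l) :
    IsLeast {N : ℕ | ∀ F : Finset (ℝ × ℝ), GenPos F → N ≤ F.card →
        HasCup k F ∨ HasCap l F}
      (Nat.choose (k + l - 4) (k - 2) + 1) := by
  constructor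
  · intro F hGP hcard
    have hslope := hGP.1
    have hsg : ∀ a ∈ F, ∀ b ∈ F, ∀ c ∈ F, a.1 < b.1 → b.1 < c.1 → Sg a b c ≠ 0 := by
      intro a ha b hb c hc h1 h2 h0
      have hab : a ≠ b := fun h => absurd (congrArg Prod.fst h) (ne_of_lt h1)
      have hac : a ≠ c := fun h => absurd (congrArg Prod.fst h) (ne_of_lt (h1.trans h2))
      have hbc : b ≠ c := fun h => absurd (congrArg Prod.fst h) (ne_of_lt h2)
      exact hGP.2 a ha b hb c hc hab hac hbc ((concurrent_iff_sg (ne_of_lt h1)).mpr h0)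
    rcases es_ub (k + l) k l le_rfl hk hl F hsg hslope hcard with h | h
    · exact Or.inl ((hasCup_iff k F).mpr h)
    · exact Or.inr ((hasCap_iff l F).mpr h)
  · intro N hN
    by_contra hcon
    push_neg at hcon
    obtain ⟨F, hcard, hslope, hsg, hnocup, hnocap⟩ := es_constr (k + l) k l le_rfl hk hl
    rcases hN F (genpos_of F hslope hsg) (by omega) with h | h
    · exact hnocup ((hasCup_iff k F).mp h)
    · exact hnocap ((hasCap_iff l F).mp h)
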